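/- (Iterative estimates for a single normalization step.) Let r ≥ 1 and let (h_s)_{s≥0} be a family of homogeneous polynomials with h_s ∈ P_{s+2} and ‖h_s‖ ≤ ℱ_s for nonnegative reals ℱ_s. Let χ ∈ P_{r+2} with expansion χ = Σ_{|k|+|k̃|=r+2} c_{k,k̃} u^k v^k̃ and D = Σ_{k,k̃} |c_{k,k̃}| · max_{1≤j≤n} max(k_j, k̃_j). Define, for each m ≥ 0, the new term h'_m = h_m + Σ_{j≥1, s≥0, s+jr=m} (1/j!) L_χ^j h_s (a finite sum). Then ‖h'_m‖ ≤ ℱ'_m, where ℱ'_m = ℱ_m + Σ_{j≥1, s≥0, s+jr=m} (∏_{i=0}^{j−1}(s+ir+2) / j!) · D^j · ℱ_s. -/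

import Mathlib

open MvPolynomial

/-- The Poisson bracket `{f,g} = ∑_j (∂f/∂v_j ∂g/∂u_j − ∂f/∂u_j ∂g/∂v_j)`. -/
noncomputable def poissonBracket (n : ℕ) (f g : MvPolynomial (Fin n ⊕ Fin n) ℂ) :
    MvPolynomial (Fin n ⊕ Fin n) ℂ :=
  ∑ j : Fin n,
    (pderiv (Sum.inr j) f * pderiv (Sum.inl j) g -
      pderiv (Sum.inl j) f * pderiv (Sum.inr j) g)

/-- The ℓ¹-norm `‖f‖ = ∑ |c_{ℓ,ℓ̃}|` of the coefficients of a polynomial. -/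
noncomputable def polyNorm (n : ℕ) (f : MvPolynomial (Fin n ⊕ Fin n) ℂ) : ℝ :=
  ∑ d ∈ f.support, ‖coeff d f‖

/-- The constant `D = ∑_{k,k̃} |c_{k,k̃}| · max_j max(k_j, k̃_j)`. -/
noncomputable def Dconst (n : ℕ) (χ : MvPolynomial (Fin n ⊕ Fin n) ℂ) : ℝ :=
  ∑ d ∈ χ.support,
    ‖coeff d χ‖ *
      ((Finset.univ.sup fun j : Fin n => max (d (Sum.inl j)) (d (Sum.inr j)) : ℕ) : ℝ)


lemma polyNorm_nonneg (n : ℕ) (f : MvPolynomial (Fin n ⊕ Fin n) ℂ) : 0 ≤ polyNorm n f :=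
  Finset.sum_nonneg fun _ _ => norm_nonneg _

lemma polyNorm_eq_sum (n : ℕ) (f : MvPolynomial (Fin n ⊕ Fin n) ℂ) (S : Finset _)
    (hS : f.support ⊆ S) : polyNorm n f = ∑ d ∈ S, ‖coeff d f‖ := by
  refine Finset.sum_subset hS fun d _ hd => ?_
  simp [MvPolynomial.notMem_support_iff.mp hd]

lemma polyNorm_add_le (n : ℕ) (f g : MvPolynomial (Fin n ⊕ Fin n) ℂ) :
    polyNorm n (f + g) ≤ polyNorm n f + polyNorm n g := by
  rw [polyNorm_eq_sum n (f + g) (f.support ∪ g.support) (MvPolynomial.support_add),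
    polyNorm_eq_sum n f (f.support ∪ g.support) Finset.subset_union_left,
    polyNorm_eq_sum n g (f.support ∪ g.support) Finset.subset_union_right,
    ← Finset.sum_add_distrib]
  exact Finset.sum_le_sum fun d _ => by simpa [coeff_add] using norm_add_le _ _

lemma polyNorm_sub_le (n : ℕ) (f g : MvPolynomial (Fin n ⊕ Fin n) ℂ) :
    polyNorm n (f - g) ≤ polyNorm n f + polyNorm n g := by
  rw [polyNorm_eq_sum n (f - g) (f.support ∪ g.support) (MvPolynomial.support_sub _ _ _),
    polyNorm_eq_sum n f (f.support ∪ g.support) Finset.subset_union_left,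
    polyNorm_eq_sum n g (f.support ∪ g.support) Finset.subset_union_right,
    ← Finset.sum_add_distrib]
  exact Finset.sum_le_sum fun d _ => by simpa [coeff_sub] using (norm_sub_le (coeff d f) (coeff d g)) 

lemma polyNorm_sum_le (n : ℕ) {ι : Type*} (S : Finset ι)
    (g : ι → MvPolynomial (Fin n ⊕ Fin n) ℂ) :
    polyNorm n (∑ i ∈ S, g i) ≤ ∑ i ∈ S, polyNorm n (g i) := by
  classical
  induction S using Finset.cons_induction with
  | empty => simp [polyNorm]
  | cons a s ha ih =>
    rw [Finset.sum_cons, Finset.sum_cons]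
    exact (polyNorm_add_le n _ _).trans (by linarith)

lemma polyNorm_smul_le (n : ℕ) (c : ℂ) (f : MvPolynomial (Fin n ⊕ Fin n) ℂ) :
    polyNorm n (c • f) ≤ ‖c‖ * polyNorm n f := by
  rw [polyNorm_eq_sum n (c • f) f.support (MvPolynomial.support_smul), polyNorm, Finset.mul_sum]
  exact Finset.sum_le_sum fun d _ => by simp [MvPolynomial.coeff_smul]

lemma polyNorm_monomial_le (n : ℕ) (e : (Fin n ⊕ Fin n) →₀ ℕ) (c : ℂ) :
    polyNorm n (monomial e c) ≤ ‖c‖ := by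
  by_cases hc : c = 0
  · simp [hc, polyNorm]
  · rw [polyNorm_eq_sum n _ {e} (by simp [MvPolynomial.support_monomial, hc])]
    simp

lemma pb_sum_right (n : ℕ) {ι : Type*} (χ : MvPolynomial (Fin n ⊕ Fin n) ℂ) (S : Finset ι)
    (g : ι → MvPolynomial (Fin n ⊕ Fin n) ℂ) :
    poissonBracket n χ (∑ i ∈ S, g i) = ∑ i ∈ S, poissonBracket n χ (g i) := by
  simp only [poissonBracket, map_sum, Finset.mul_sum, ← Finset.sum_sub_distrib]
  exact Finset.sum_comm

lemma pb_sum_left (n : ℕ) {ι : Type*} (f : MvPolynomial (Fin n ⊕ Fin n) ℂ) (S : Finset ι)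
    (g : ι → MvPolynomial (Fin n ⊕ Fin n) ℂ) :
    poissonBracket n (∑ i ∈ S, g i) f = ∑ i ∈ S, poissonBracket n (g i) f := by
  simp only [poissonBracket, map_sum, Finset.sum_mul, ← Finset.sum_sub_distrib]
  exact Finset.sum_comm

lemma pb_monomial_norm_le (n : ℕ) (d e : (Fin n ⊕ Fin n) →₀ ℕ) (c a : ℂ) :
    polyNorm n (poissonBracket n (monomial d c) (monomial e a)) ≤
      ‖c‖ * ‖a‖ *
        ∑ j : Fin n, ((d (Sum.inr j) * e (Sum.inl j) + d (Sum.inl j) * e (Sum.inr j) : ℕ) : ℝ) := by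
  unfold poissonBracket
  refine (polyNorm_sum_le n _ _).trans ?_
  rw [Finset.mul_sum]
  refine Finset.sum_le_sum fun j _ => ?_
  refine (polyNorm_sub_le n _ _).trans ?_
  simp only [pderiv_monomial, MvPolynomial.monomial_mul]
  have h1 := polyNorm_monomial_le n (d - Finsupp.single (Sum.inr j) 1 +
      (e - Finsupp.single (Sum.inl j) 1)) (c * (d (Sum.inr j) : ℂ) * (a * (e (Sum.inl j) : ℂ)))
  have h2 := polyNorm_monomial_le n (d - Finsupp.single (Sum.inl j) 1 +
      (e - Finsupp.single (Sum.inr j) 1)) (c * (d (Sum.inl j) : ℂ) * (a * (e (Sum.inr j) : ℂ)))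
  have e1 : ‖c * (d (Sum.inr j) : ℂ) * (a * (e (Sum.inl j) : ℂ))‖ =
      ‖c‖ * ‖a‖ * ((d (Sum.inr j) * e (Sum.inl j) : ℕ) : ℝ) := by
    simp [map_mul, Complex.norm_natCast]; ring
  have e2 : ‖c * (d (Sum.inl j) : ℂ) * (a * (e (Sum.inr j) : ℂ))‖ =
      ‖c‖ * ‖a‖ * ((d (Sum.inl j) * e (Sum.inr j) : ℕ) : ℝ) := by
    simp [map_mul, Complex.norm_natCast]; ring
  rw [e1] at h1; rw [e2] at h2
  push_cast
  push_cast at h1 h2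
  nlinarith [h1, h2]

lemma degree_sum_eq (n : ℕ) (e : (Fin n ⊕ Fin n) →₀ ℕ) :
    ∑ j : Fin n, (e (Sum.inl j) + e (Sum.inr j)) = e.degree := by
  have : e.degree = ∑ i : Fin n ⊕ Fin n, e i := by
    rw [Finsupp.degree]
    exact Finset.sum_subset (Finset.subset_univ _)
      (fun i _ hi => Finsupp.notMem_support_iff.mp hi)
  rw [this, Fintype.sum_sum_type, ← Finset.sum_add_distrib]

lemma key_nat_ineq (n : ℕ) (d e : (Fin n ⊕ Fin n) →₀ ℕ) (t : ℕ) (het : e.degree = t) :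
    ∑ j : Fin n, (d (Sum.inr j) * e (Sum.inl j) + d (Sum.inl j) * e (Sum.inr j)) ≤
      (Finset.univ.sup fun j : Fin n => max (d (Sum.inl j)) (d (Sum.inr j))) * t := by
  set M := Finset.univ.sup fun j : Fin n => max (d (Sum.inl j)) (d (Sum.inr j)) with hM
  calc ∑ j : Fin n, (d (Sum.inr j) * e (Sum.inl j) + d (Sum.inl j) * e (Sum.inr j))
      ≤ ∑ j : Fin n, (M * e (Sum.inl j) + M * e (Sum.inr j)) := by
        refine Finset.sum_le_sum fun j _ => ?_
        have hj : max (d (Sum.inl j)) (d (Sum.inr j)) ≤ M :=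
          Finset.le_sup (f := fun j : Fin n => max (d (Sum.inl j)) (d (Sum.inr j)))
            (Finset.mem_univ j)
        have h1 : d (Sum.inr j) ≤ M := le_trans (le_max_right _ _) hj
        have h2 : d (Sum.inl j) ≤ M := le_trans (le_max_left _ _) hj
        exact Nat.add_le_add (Nat.mul_le_mul_right _ h1) (Nat.mul_le_mul_right _ h2)
    _ = M * ∑ j : Fin n, (e (Sum.inl j) + e (Sum.inr j)) := by rw [Finset.mul_sum]; exact Finset.sum_congr rfl fun j _ => (Nat.mul_add M _ _).symm
    _ = M * t := by rw [degree_sum_eq, het]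

lemma pb_norm_le (n : ℕ) (χ f : MvPolynomial (Fin n ⊕ Fin n) ℂ) (t : ℕ)
    (hf : f.IsHomogeneous t) :
    polyNorm n (poissonBracket n χ f) ≤ Dconst n χ * t * polyNorm n f := by
  conv_lhs => rw [← χ.support_sum_monomial_coeff, ← f.support_sum_monomial_coeff]
  rw [pb_sum_left]
  refine (polyNorm_sum_le n _ _).trans ?_
  have step : ∀ d ∈ χ.support,
      polyNorm n (poissonBracket n (monomial d (coeff d χ))
        (∑ e ∈ f.support, monomial e (coeff e f))) ≤
      ∑ e ∈ f.support, ‖coeff d χ‖ *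
        ((Finset.univ.sup fun j : Fin n => max (d (Sum.inl j)) (d (Sum.inr j)) : ℕ) : ℝ) *
        (t : ℝ) * ‖coeff e f‖ := by
    intro d _
    rw [pb_sum_right]
    refine (polyNorm_sum_le n _ _).trans (Finset.sum_le_sum fun e he => ?_)
    refine (pb_monomial_norm_le n d e _ _).trans ?_
    have het : e.degree = t := by
      by_contra hne
      exact MvPolynomial.mem_support_iff.mp he (hf.coeff_eq_zero hne)
    have hk := key_nat_ineq n d e t het
    have hkR : (∑ j : Fin n, ((d (Sum.inr j) * e (Sum.inl j) +
        d (Sum.inl j) * e (Sum.inr j) : ℕ) : ℝ)) ≤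
        ((Finset.univ.sup fun j : Fin n => max (d (Sum.inl j)) (d (Sum.inr j)) : ℕ) : ℝ) *
          (t : ℝ) := by
      push_cast
      exact_mod_cast hk
    have h1 : (0:ℝ) ≤ ‖coeff d χ‖ * ‖coeff e f‖ :=
      mul_nonneg (norm_nonneg _) (norm_nonneg _)
    nlinarith [norm_nonneg (coeff d χ),
      norm_nonneg (coeff e f)]
  refine (Finset.sum_le_sum step).trans (le_of_eq ?_)
  rw [Dconst, polyNorm, Finset.sum_mul, Finset.sum_mul]
  exact Finset.sum_congr rfl fun d _ => by rw [Finset.mul_sum]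

lemma degree_univ (n : ℕ) (e : (Fin n ⊕ Fin n) →₀ ℕ) :
    e.degree = ∑ i : Fin n ⊕ Fin n, e i := by
  rw [Finsupp.degree]
  exact Finset.sum_subset (Finset.subset_univ _)
    (fun i _ hi => Finsupp.notMem_support_iff.mp hi)

lemma degree_sub_single (n : ℕ) (e : (Fin n ⊕ Fin n) →₀ ℕ) (i : Fin n ⊕ Fin n)
    (he : e i ≠ 0) : (e - Finsupp.single i 1).degree + 1 = e.degree := by
  rw [degree_univ, degree_univ]
  have hs : ∑ j : Fin n ⊕ Fin n, (Finsupp.single i 1 : (Fin n ⊕ Fin n) →₀ ℕ) j = 1 := by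
    simp [Finsupp.single_apply]
  have hpt : ∀ j : Fin n ⊕ Fin n, (e - Finsupp.single i 1 : (Fin n ⊕ Fin n) →₀ ℕ) j + Finsupp.single i 1 j = e j := by
    intro j
    rcases eq_or_ne j i with rfl | hne
    · simp only [Finsupp.tsub_apply, Finsupp.single_apply, if_pos rfl]
      exact Nat.sub_add_cancel (Nat.one_le_iff_ne_zero.mpr he)
    · simp [Finsupp.tsub_apply, Finsupp.single_apply, (Ne.symm hne)]
  calc (∑ j : Fin n ⊕ Fin n, (e - Finsupp.single i 1 : (Fin n ⊕ Fin n) →₀ ℕ) j) + 1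
      = (∑ j : Fin n ⊕ Fin n, (e - Finsupp.single i 1 : (Fin n ⊕ Fin n) →₀ ℕ) j) +
        ∑ j : Fin n ⊕ Fin n, (Finsupp.single i 1 : (Fin n ⊕ Fin n) →₀ ℕ) j := by rw [hs]
    _ = ∑ j : Fin n ⊕ Fin n, ((e - Finsupp.single i 1 : (Fin n ⊕ Fin n) →₀ ℕ) j + Finsupp.single i 1 j) := by
        rw [Finset.sum_add_distrib]
    _ = ∑ j : Fin n ⊕ Fin n, e j := Finset.sum_congr rfl fun j _ => hpt j

lemma pderiv_isHomogeneous (n : ℕ) (i : Fin n ⊕ Fin n) (f : MvPolynomial (Fin n ⊕ Fin n) ℂ)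
    (t : ℕ) (hf : f.IsHomogeneous (t + 1)) : (pderiv i f).IsHomogeneous t := by
  conv_lhs => rw [← f.support_sum_monomial_coeff]
  rw [map_sum]
  refine MvPolynomial.IsHomogeneous.sum _ _ _ fun e he => ?_
  rw [pderiv_monomial]
  by_cases h0 : e i = 0
  · simp only [h0, Nat.cast_zero, mul_zero, map_zero]
    exact MvPolynomial.isHomogeneous_zero _ _ _
  · refine MvPolynomial.isHomogeneous_monomial _ ?_
    have het : e.degree = t + 1 := by
      by_contra hne
      exact MvPolynomial.mem_support_iff.mp he (hf.coeff_eq_zero hne)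
    have := degree_sub_single n e i h0
    omega

lemma pb_isHomogeneous (n : ℕ) (χ f : MvPolynomial (Fin n ⊕ Fin n) ℂ) (a b : ℕ)
    (hχ : χ.IsHomogeneous (a + 1)) (hf : f.IsHomogeneous (b + 1)) :
    (poissonBracket n χ f).IsHomogeneous (a + b) := by
  refine MvPolynomial.IsHomogeneous.sum _ _ _ fun j _ => ?_
  exact ((pderiv_isHomogeneous n _ χ a hχ).mul (pderiv_isHomogeneous n _ f b hf)).sub
    ((pderiv_isHomogeneous n _ χ a hχ).mul (pderiv_isHomogeneous n _ f b hf))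

lemma Dconst_nonneg (n : ℕ) (χ : MvPolynomial (Fin n ⊕ Fin n) ℂ) : 0 ≤ Dconst n χ :=
  Finset.sum_nonneg fun _ _ => mul_nonneg (norm_nonneg _) (Nat.cast_nonneg _)

lemma iter_bound (n r : ℕ) (χ : MvPolynomial (Fin n ⊕ Fin n) ℂ)
    (hχ : χ.IsHomogeneous (r + 2)) (f : MvPolynomial (Fin n ⊕ Fin n) ℂ) (s : ℕ)
    (hf : f.IsHomogeneous (s + 2)) (j : ℕ) :
    ((poissonBracket n χ)^[j] f).IsHomogeneous (s + j * r + 2) ∧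
      polyNorm n ((poissonBracket n χ)^[j] f) ≤
        (∏ i ∈ Finset.range j, ((s : ℝ) + (i : ℝ) * (r : ℝ) + 2)) * (Dconst n χ) ^ j *
          polyNorm n f := by
  induction j with
  | zero => simpa using hf
  | succ j ih =>
    obtain ⟨ih1, ih2⟩ := ih
    rw [Function.iterate_succ_apply']
    constructor
    · have e1 : s + (j + 1) * r + 2 = r + 1 + (s + j * r + 1) := by ring
      rw [e1]
      exact pb_isHomogeneous n χ _ (r + 1) (s + j * r + 1) hχ ih1
    · have hb := pb_norm_le n χ _ (s + j * r + 2) ih1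
      have hD := Dconst_nonneg n χ
      have hP : (0:ℝ) ≤ ∏ i ∈ Finset.range j, ((s : ℝ) + (i : ℝ) * (r : ℝ) + 2) :=
        Finset.prod_nonneg fun i _ => by positivity
      have hN := polyNorm_nonneg n ((poissonBracket n χ)^[j] f)
      rw [Finset.prod_range_succ]
      have ht : ((s + j * r + 2 : ℕ) : ℝ) = (s : ℝ) + (j : ℝ) * (r : ℝ) + 2 := by push_cast; ring
      rw [ht] at hb
      have h2 : Dconst n χ * ((s : ℝ) + (j : ℝ) * (r : ℝ) + 2) *
          polyNorm n ((poissonBracket n χ)^[j] f) ≤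
          Dconst n χ * ((s : ℝ) + (j : ℝ) * (r : ℝ) + 2) *
          ((∏ i ∈ Finset.range j, ((s : ℝ) + (i : ℝ) * (r : ℝ) + 2)) * (Dconst n χ) ^ j *
            polyNorm n f) :=
        mul_le_mul_of_nonneg_left ih2 (by positivity)
      calc polyNorm n (poissonBracket n χ ((poissonBracket n χ)^[j] f)) ≤
            Dconst n χ * ((s : ℝ) + (j : ℝ) * (r : ℝ) + 2) *
              polyNorm n ((poissonBracket n χ)^[j] f) := hb
        _ ≤ _ := h2
        _ = (∏ i ∈ Finset.range j, ((s : ℝ) + (i : ℝ) * (r : ℝ) + 2)) *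
              ((s : ℝ) + (j : ℝ) * (r : ℝ) + 2) * Dconst n χ ^ (j + 1) * polyNorm n f := by
            ring

/-- Iterative estimates for a single normalization step: the new term of degree `m+2` is
`h'_m = h_m + ∑_{j ≥ 1, s ≥ 0, s + j r = m} (1/j!) L_χ^j h_s`; here the pairs `(j,s)`
with `j ≥ 1`, `s ≥ 0`, `s + j r = m` are parametrized by `j ∈ [1, m/r]`, `s = m - j r`. -/
theorem stmt7 (n : ℕ) (hn : 1 ≤ n) (r : ℕ) (hr : 1 ≤ r)
    (h : ℕ → MvPolynomial (Fin n ⊕ Fin n) ℂ) (F : ℕ → ℝ)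
    (hdeg : ∀ s : ℕ, (h s).IsHomogeneous (s + 2))
    (hF0 : ∀ s : ℕ, 0 ≤ F s) (hFs : ∀ s : ℕ, polyNorm n (h s) ≤ F s)
    (χ : MvPolynomial (Fin n ⊕ Fin n) ℂ) (hχ : χ.IsHomogeneous (r + 2)) :
    ∀ m : ℕ,
      polyNorm n
          (h m + ∑ j ∈ Finset.Icc 1 (m / r),
            ((j.factorial : ℂ)⁻¹) • (poissonBracket n χ)^[j] (h (m - j * r))) ≤
        F m + ∑ j ∈ Finset.Icc 1 (m / r),
          ((∏ i ∈ Finset.range j, (((m - j * r : ℕ) : ℝ) + (i : ℝ) * (r : ℝ) + 2)) /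
              (j.factorial : ℝ)) * (Dconst n χ) ^ j * F (m - j * r) := by
  intro m
  refine (polyNorm_add_le n _ _).trans (add_le_add (hFs m) ?_)
  refine (polyNorm_sum_le n _ _).trans (Finset.sum_le_sum fun j _ => ?_)
  set s := m - j * r with hs
  refine (polyNorm_smul_le n _ _).trans ?_
  have habs : ‖(j.factorial : ℂ)⁻¹‖ = ((j.factorial : ℝ))⁻¹ := by
    rw [norm_inv, Complex.norm_natCast]
  rw [habs]
  have hib := (iter_bound n r χ hχ (h s) s (hdeg s) j).2
  have hP : (0:ℝ) ≤ ∏ i ∈ Finset.range j, ((s : ℝ) + (i : ℝ) * (r : ℝ) + 2) :=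
    Finset.prod_nonneg fun i _ => by positivity
  have hD : (0:ℝ) ≤ (Dconst n χ) ^ j := pow_nonneg (Dconst_nonneg n χ) j
  have hfac : (0:ℝ) ≤ ((j.factorial : ℝ))⁻¹ := by positivity
  have h2 : polyNorm n ((poissonBracket n χ)^[j] (h s)) ≤
      (∏ i ∈ Finset.range j, ((s : ℝ) + (i : ℝ) * (r : ℝ) + 2)) * (Dconst n χ) ^ j * F s :=
    hib.trans (mul_le_mul_of_nonneg_left (hFs s) (mul_nonneg hP hD))
  calc ((j.factorial : ℝ))⁻¹ * polyNorm n ((poissonBracket n χ)^[j] (h s)) ≤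
        ((j.factorial : ℝ))⁻¹ *
          ((∏ i ∈ Finset.range j, ((s : ℝ) + (i : ℝ) * (r : ℝ) + 2)) * (Dconst n χ) ^ j * F s) :=
        mul_le_mul_of_nonneg_left h2 hfac
    _ = ((∏ i ∈ Finset.range j, ((s : ℝ) + (i : ℝ) * (r : ℝ) + 2)) / (j.factorial : ℝ)) *
          (Dconst n χ) ^ j * F s := by ring
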